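/- Let p be an odd prime. Then the second moment of the family y² = x³ + (T+1)x² + Tx equals p² − 2p − 1; that is, Σ_{t=0}^{p−1} ( Σ_{x=0}^{p−1} ((x³ + (t+1)x² + t·x)/p) )² = p² − 2p − 1. -/

import Mathlib

open Finset

variable {p : ℕ} [Fact p.Prime]

private lemma sm_char_ne_two (hodd : p ≠ 2) : ringChar (ZMod p) ≠ 2 := by
  rw [ZMod.ringChar_zmod_n]; exact hodd

private lemma sm_sum_range_eq (f : ZMod p → ℤ) :
    ∑ i ∈ Finset.range p, f (i : ZMod p) = ∑ x : ZMod p, f x := by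
  have hp : 0 < p := (Fact.out : p.Prime).pos
  refine Finset.sum_nbij' (fun i => (i : ZMod p)) (fun x => x.val) ?_ ?_ ?_ ?_ ?_
  · intro a _; exact Finset.mem_univ _
  · intro x _
    haveI : NeZero p := ⟨hp.ne'⟩
    exact Finset.mem_range.mpr (ZMod.val_lt x)
  · intro a ha; exact ZMod.val_cast_of_lt (Finset.mem_range.mp ha)
  · intro x _
    haveI : NeZero p := ⟨hp.ne'⟩
    exact ZMod.natCast_rightInverse x
  · intro a _; rfl

/-- Key lemma: shifted quadratic character sum. -/
private lemma sm_key (hodd : p ≠ 2) {c : ZMod p} (hc : c ≠ 0) :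
    ∑ t : ZMod p, quadraticChar (ZMod p) t * quadraticChar (ZMod p) (t + c) = -1 := by
  set χ := quadraticChar (ZMod p)
  have h2 := sm_char_ne_two (p := p) hodd
  -- drop the t = 0 term
  rw [← Finset.sum_erase_add _ _ (Finset.mem_univ (0 : ZMod p))]
  rw [show χ 0 * χ (0 + c) = 0 by simp [χ]]
  rw [add_zero]
  have step : ∀ t ∈ Finset.univ.erase (0 : ZMod p),
      χ t * χ (t + c) = χ (1 + c * t⁻¹) := by
    intro t ht
    have ht0 : t ≠ 0 := Finset.ne_of_mem_erase ht
    have : t + c = t * (1 + c * t⁻¹) := by field_simp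
    rw [this, map_mul, ← mul_assoc, ← map_mul, ← sq, quadraticChar_sq_one' ht0, one_mul]
  rw [Finset.sum_congr rfl step]
  have hbij : ∑ t ∈ Finset.univ.erase (0 : ZMod p), χ (1 + c * t⁻¹)
      = ∑ u ∈ Finset.univ.erase (1 : ZMod p), χ u := by
    refine Finset.sum_nbij' (fun t => 1 + c * t⁻¹) (fun u => c * (u - 1)⁻¹) ?_ ?_ ?_ ?_ ?_
    · intro t ht
      have ht0 : t ≠ 0 := Finset.ne_of_mem_erase ht
      refine Finset.mem_erase.mpr ⟨?_, Finset.mem_univ _⟩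
      intro h
      have : c * t⁻¹ = 0 := by linear_combination h
      rcases mul_eq_zero.mp this with h' | h'
      · exact hc h'
      · exact ht0 (inv_eq_zero.mp h')
    · intro u hu
      have hu1 : u ≠ 1 := Finset.ne_of_mem_erase hu
      refine Finset.mem_erase.mpr ⟨?_, Finset.mem_univ _⟩
      exact mul_ne_zero hc (inv_ne_zero (sub_ne_zero.mpr hu1))
    · intro t ht
      have ht0 : t ≠ 0 := Finset.ne_of_mem_erase ht
      field_simp
      simp [hc]
    · intro u hu
      have hu1 : u ≠ 1 := Finset.ne_of_mem_erase hu
      have : u - 1 ≠ 0 := sub_ne_zero.mpr hu1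
      field_simp
      ring
    · intro t _; rfl
  rw [hbij]
  have h1 : χ 1 = 1 := by simp [χ]
  have h3 := Finset.sum_erase_add Finset.univ (fun u => χ u) (Finset.mem_univ (1 : ZMod p))
  rw [quadraticChar_sum_zero h2] at h3
  rw [h1] at h3
  linarith

/-- sum of χ(t)^2 = p - 1 -/
private lemma sm_sq_sum (hodd : p ≠ 2) :
    ∑ t : ZMod p, (quadraticChar (ZMod p) t) ^ 2 = (p : ℤ) - 1 := by
  have : ∀ t : ZMod p, (quadraticChar (ZMod p) t) ^ 2 = if t = 0 then 0 else 1 := by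
    intro t
    by_cases ht : t = 0
    · simp [ht]
    · rw [quadraticChar_sq_one ht]; simp [ht]
  rw [Finset.sum_congr rfl fun t _ => this t]
  have h2 : ∀ t : ZMod p, (if t = 0 then (0:ℤ) else 1) = 1 - if t = 0 then 1 else 0 := by
    intro t; by_cases ht : t = 0 <;> simp [ht]
  rw [Finset.sum_congr rfl fun t _ => h2 t, Finset.sum_sub_distrib]
  simp [Finset.sum_ite_eq', ZMod.card]

/-- sum of χ(X(X+1)) = -1 -/
private lemma sm_a_sum (hodd : p ≠ 2) :
    ∑ X : ZMod p, quadraticChar (ZMod p) (X * (X + 1)) = -1 := by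
  have : ∀ X : ZMod p, quadraticChar (ZMod p) (X * (X + 1))
      = quadraticChar (ZMod p) X * quadraticChar (ZMod p) (X + 1) := fun X => map_mul _ _ _
  rw [Finset.sum_congr rfl fun X _ => this X]
  exact sm_key hodd one_ne_zero

/-- sum of χ(X(X+1))² = p - 2 -/
private lemma sm_a_sq_sum :
    ∑ X : ZMod p, (quadraticChar (ZMod p) (X * (X + 1))) ^ 2 = (p : ℤ) - 2 := by
  have hz : (0 : ZMod p) ≠ -1 := by
    intro h
    exact one_ne_zero (α := ZMod p) (by linear_combination h)
  have key : ∀ X : ZMod p, (quadraticChar (ZMod p) (X * (X + 1))) ^ 2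
      = 1 - (if X = 0 then 1 else 0) - (if X = -1 then 1 else 0) := by
    intro X
    by_cases h0 : X = 0
    · subst h0; simp [hz.symm]
    · by_cases h1 : X = -1
      · subst h1; simp
      · have hne : X * (X + 1) ≠ 0 := by
          apply mul_ne_zero h0
          intro h; exact h1 (by linear_combination h)
        rw [quadraticChar_sq_one hne]; simp [h0, h1]
  rw [Finset.sum_congr rfl fun X _ => key X]
  rw [Finset.sum_sub_distrib, Finset.sum_sub_distrib]
  simp [Finset.sum_ite_eq', ZMod.card]
  ring

/-- For an odd prime `p`, the second moment of the family
`y² = x³ + (T+1)x² + Tx` equals `p² − 2p − 1`. -/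
theorem second_moment_T_plus_one_family (p : ℕ) [Fact p.Prime] (hodd : p ≠ 2) :
    ∑ t ∈ Finset.range p,
        (∑ x ∈ Finset.range p,
            legendreSym p ((x : ℤ) ^ 3 + ((t : ℤ) + 1) * (x : ℤ) ^ 2 + (t : ℤ) * (x : ℤ))) ^ 2
      = (p : ℤ) ^ 2 - 2 * p - 1 := by
  haveI : NeZero p := ⟨(Fact.out : p.Prime).pos.ne'⟩
  set χ := quadraticChar (ZMod p) with hχ
  set a : ZMod p → ℤ := fun X => χ (X * (X + 1)) with ha
  have hterm : ∀ t x : ℕ,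
      legendreSym p ((x : ℤ) ^ 3 + ((t : ℤ) + 1) * (x : ℤ) ^ 2 + (t : ℤ) * (x : ℤ))
        = a (x : ZMod p) * χ ((x : ZMod p) + (t : ZMod p)) := by
    intro t x
    rw [ha, hχ, legendreSym, ← map_mul]
    congr 1
    push_cast
    ring
  have hre : ∑ t ∈ Finset.range p,
      (∑ x ∈ Finset.range p,
          legendreSym p ((x : ℤ) ^ 3 + ((t : ℤ) + 1) * (x : ℤ) ^ 2 + (t : ℤ) * (x : ℤ))) ^ 2
      = ∑ T : ZMod p, (∑ X : ZMod p, a X * χ (X + T)) ^ 2 := by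
    rw [← sm_sum_range_eq (fun T : ZMod p => (∑ X : ZMod p, a X * χ (X + T)) ^ 2)]
    apply Finset.sum_congr rfl
    intro t _
    congr 1
    rw [← sm_sum_range_eq (fun X : ZMod p => a X * χ (X + (t : ZMod p)))]
    exact Finset.sum_congr rfl fun x _ => hterm t x
  rw [hre]
  -- inner T-sum
  have hT : ∀ X Y : ZMod p, ∑ T : ZMod p, χ (X + T) * χ (Y + T)
      = if X = Y then (p : ℤ) - 1 else -1 := by
    intro X Y
    have hsub : ∑ T : ZMod p, χ (X + T) * χ (Y + T)
        = ∑ S : ZMod p, χ S * χ (S + (Y - X)) := by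
      apply Fintype.sum_equiv (Equiv.addLeft X)
      intro T
      simp only [Equiv.coe_addLeft]
      congr 1
      ring
    rw [hsub]
    by_cases hXY : X = Y
    · subst hXY
      simp only [sub_self, add_zero, if_pos rfl, ← sq]
      exact sm_sq_sum hodd
    · rw [if_neg hXY]
      exact sm_key hodd (sub_ne_zero.mpr fun h => hXY h.symm)
  have expand : ∑ T : ZMod p, (∑ X : ZMod p, a X * χ (X + T)) ^ 2
      = ∑ X : ZMod p, ∑ Y : ZMod p, a X * a Y * (if X = Y then (p : ℤ) - 1 else -1) := by
    simp_rw [sq, Finset.sum_mul_sum]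
    rw [Finset.sum_comm]
    apply Finset.sum_congr rfl; intro X _
    rw [Finset.sum_comm]
    apply Finset.sum_congr rfl; intro Y _
    rw [← hT X Y, Finset.mul_sum]
    apply Finset.sum_congr rfl; intro T _
    ring
  rw [expand]
  have step : ∀ X : ZMod p, ∑ Y : ZMod p, a X * a Y * (if X = Y then (p : ℤ) - 1 else -1)
      = (p : ℤ) * (a X) ^ 2 - a X * ∑ Y : ZMod p, a Y := by
    intro X
    have : ∀ Y : ZMod p, a X * a Y * (if X = Y then (p : ℤ) - 1 else -1)
        = (p : ℤ) * (if X = Y then a X * a Y else 0) - a X * a Y := by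
      intro Y
      by_cases h : X = Y <;> simp [h] <;> ring
    rw [Finset.sum_congr rfl fun Y _ => this Y, Finset.sum_sub_distrib, ← Finset.mul_sum,
      Finset.sum_ite_eq Finset.univ X, if_pos (Finset.mem_univ X), ← Finset.mul_sum]
    ring
  rw [Finset.sum_congr rfl fun X _ => step X, Finset.sum_sub_distrib, ← Finset.mul_sum,
    ← Finset.sum_mul]
  rw [show (∑ X : ZMod p, (a X) ^ 2) = (p : ℤ) - 2 from sm_a_sq_sum,
    show (∑ X : ZMod p, a X) = -1 from sm_a_sum hodd]
  ring
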